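/- arXiv:2012.08682 — 2 statements merged into one kernel-verified Lean document; each statement's English description precedes it below -/
import Mathlib

section
/- If period p is an optimal period (i.e., n̄(p) = n*), then for every slot t within period p (s_p ≤ t ≤ f_p) and every source m, the AoI under the auxiliary algorithm equals the AoI under the optimal algorithm: h^η̂_m(t) = h^{π*}_m(t). -/
open MeasureTheory ProbabilityTheory

namespace AgingBandits

/-! ### System model

A single-hop wireless network with `M` sources, `N` unreliable ON/OFF channels and one
destination, evolving in discrete slots `t = 1, 2, …`.  At the beginning of each slot each
source independently generates a packet with probability `lam`; each source keeps only its
freshest undelivered packet.  In each slot the learning algorithm selects one source and one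
channel; the selected source's packet (or a dummy packet if its queue is empty) is delivered
iff the selected channel is ON.  Channel states are coupled through a single i.i.d. uniform
sequence `U`: channel `n` is ON in slot `t` iff `U t ≤ mu n`. -/

/-- The observation available to the source policy in a slot: the packet generations of the
slot, the current AoI of every source, and the generation times of the packets currently
waiting in the sources' queues (after the generations of the slot). -/
structure SrcObs (M : ℕ) where
  arr : Fin M → Bool
  age : Fin M → ℕ
  queue : Fin M → Option ℕ

/-- A source policy: maps the source history `H_A(t) = {a(1), h(1), …, a(t), h(t)}`
(together with the generation times of the queued packets) to the source selected in slot
`t`. -/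
def SourcePolicy (M : ℕ) : Type := List (SrcObs M) → Fin M

/-- A queue-independent channel policy: maps the channel history
`H_B(t) = {n(1), b(1), …, n(t-1), b(t-1)}` of previously selected channels and observed
channel states, together with a fresh uniform random seed (allowing randomized policies),
to the channel selected in slot `t`. -/
def ChannelPolicy (N : ℕ) : Type := List (Fin N × Bool) → ℝ → Fin N

/-- A queue-dependent channel policy: additionally observes, for each past slot and for the
current slot, whether the system was empty (no undelivered data packet in any queue). -/
def QChannelPolicy (N : ℕ) : Type := List (Fin N × Bool × Bool) → Bool → ℝ → Fin N

/-- A queue-independent channel policy regarded as a (degenerate) queue-dependent one. -/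
def liftQI {N : ℕ} (pb : ChannelPolicy N) : QChannelPolicy N :=
  fun hist _ v => pb (hist.map fun x => (x.1, x.2.1)) v

/-- A source policy is work-conserving if it never selects a source with an empty queue
(i.e. never transmits a dummy packet) while some source has an undelivered data packet. -/
def WorkConserving {M : ℕ} (pa : SourcePolicy M) : Prop :=
  ∀ (L : List (SrcObs M)) (o : SrcObs M),
    (∃ m, (o.queue m).isSome) → (o.queue (pa (L ++ [o]))).isSome

/-- The state of the network at the end of a slot:  `tau m` is the generation time of the
latest packet of source `m` delivered to the destination, `queue m` is the generation time
of the freshest undelivered packet of source `m` (if any), `chHist` records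
(selected channel, observed state, system-empty flag) for every elapsed slot, `srcHist`
records the source observations of every elapsed slot, and `selCh`, `selSrc`, `emp` are the
channel and source selected in, and the empty-system indicator `E(t)` of, the last slot. -/
structure State (M N : ℕ) where
  tau : Fin M → ℕ
  queue : Fin M → Option ℕ
  chHist : List (Fin N × Bool × Bool)
  srcHist : List (SrcObs M)
  selCh : Fin N
  selSrc : Fin M
  emp : Bool

variable {M N : ℕ} [NeZero M] [NeZero N]

/-- Initial state (before slot `1`): `τ_m = 0`, all queues empty. -/
def initState (M N : ℕ) [NeZero M] [NeZero N] : State M N :=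
  ⟨fun _ => 0, fun _ => none, [], [], 0, 0, true⟩

open scoped Classical in
/-- One slot of the dynamics.  At the beginning of slot `t`, packet generations `a` refresh
the queues; the source selector and the channel policy make their selections; the selected
channel is ON iff `u ≤ mu nsel` (coupled channel states); on a successful transmission of a
data packet, `τ` is updated to the generation time of the delivered packet and the packet
leaves its queue. -/
noncomputable def step (mu : Fin N → ℝ) (sel : List (SrcObs M) → Fin M)
    (pb : QChannelPolicy N) (t : ℕ) (a : Fin M → Bool) (u v : ℝ) (s : State M N) :
    State M N :=
  let q1 : Fin M → Option ℕ := fun m => if a m then some t else s.queue m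
  let obs : SrcObs M := ⟨a, fun m => t - s.tau m, q1⟩
  let srcHist := s.srcHist ++ [obs]
  let empty : Bool := decide (∀ m, q1 m = none)
  let msel := sel srcHist
  let nsel := pb s.chHist empty v
  let isOn : Bool := decide (u ≤ mu nsel)
  let chHist := s.chHist ++ [(nsel, isOn, empty)]
  match isOn, q1 msel with
  | true, some g =>
      ⟨Function.update s.tau msel g, Function.update q1 msel none,
        chHist, srcHist, nsel, msel, empty⟩
  | _, _ => ⟨s.tau, q1, chHist, srcHist, nsel, msel, empty⟩

/-- The state at the end of slot `t`, starting from the empty initial state, given the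
per-slot source selector `sel`, the queue-dependent channel policy `pb`, the packet
generation stream `a`, the channel-coupling stream `u` and the policy-randomization
stream `v`. -/
noncomputable def run (mu : Fin N → ℝ) (sel : ℕ → List (SrcObs M) → Fin M)
    (pb : QChannelPolicy N) (a : ℕ → Fin M → Bool) (u v : ℕ → ℝ) : ℕ → State M N
  | 0 => initState M N
  | t + 1 => step mu (sel (t + 1)) pb (t + 1) (a (t + 1)) (u (t + 1)) (v (t + 1))
      (run mu sel pb a u v t)

/-! ### Probabilistic model -/

/-- Index of the independent sources of randomness: the channel-coupling uniforms `U t`,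
the policy-randomization uniforms `V t`, and the packet generations `A t m`. -/
inductive Idx (M : ℕ) where
  | u : ℕ → Idx M
  | v : ℕ → Idx M
  | a : ℕ → Fin M → Idx M

/-- Value type of each randomness source. -/
def IdxType {M : ℕ} : Idx M → Type
  | .u _ => ℝ
  | .v _ => ℝ
  | .a _ _ => Bool

instance {M : ℕ} : ∀ i : Idx M, MeasurableSpace (IdxType i)
  | .u _ => (inferInstance : MeasurableSpace ℝ)
  | .v _ => (inferInstance : MeasurableSpace ℝ)
  | .a _ _ => (inferInstance : MeasurableSpace Bool)

/-- The family of all randomness sources, as a dependent family of random variables. -/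
def family {Ω : Type*} {M : ℕ} (U V : ℕ → Ω → ℝ) (A : ℕ → Fin M → Ω → Bool) :
    ∀ i : Idx M, Ω → IdxType i
  | .u t => U t
  | .v t => V t
  | .a t m => A t m

/-- A network configuration `(λ, μ⃗)` together with its underlying probability space and
primitive random processes: `U t` (channel coupling) and `V t` (policy randomization) are
i.i.d. uniform on `[0,1]`, `A t m` are i.i.d. Bernoulli(`λ`) packet generations, and all of
them are mutually independent.  Channel `n` is ON in slot `t` iff `U t ≤ mu n`, so that
`P(channel n ON) = mu n`, i.i.d. over time, and the channel states are coupled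
monotonically across channels. -/
structure Config (M N : ℕ) : Type 1 where
  (lam : ℝ)
  (mu : Fin N → ℝ)
  (Ω : Type)
  [mΩ : MeasurableSpace Ω]
  (P : Measure Ω)
  (probP : IsProbabilityMeasure P)
  (U : ℕ → Ω → ℝ)
  (V : ℕ → Ω → ℝ)
  (A : ℕ → Fin M → Ω → Bool)
  (lam_mem : lam ∈ Set.Ioo (0 : ℝ) 1)
  (mu_mem : ∀ n, mu n ∈ Set.Ioc (0 : ℝ) 1)
  (U_meas : ∀ t, Measurable (U t))
  (V_meas : ∀ t, Measurable (V t))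
  (A_meas : ∀ t m, Measurable (A t m))
  (U_unif : ∀ t, P.map (U t) = volume.restrict (Set.Icc (0 : ℝ) 1))
  (V_unif : ∀ t, P.map (V t) = volume.restrict (Set.Icc (0 : ℝ) 1))
  (A_bern : ∀ t m, P {ω | A t m ω = true} = ENNReal.ofReal lam)
  (indep : iIndepFun (family U V A) P)

attribute [instance] Config.mΩ Config.probP

/-- The trajectory of the network under configuration `cfg`, per-slot source selector `sel`
and channel policy `pb`, on the sample path `ω`. -/
noncomputable def Config.run (cfg : Config M N) (sel : ℕ → List (SrcObs M) → Fin M)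
    (pb : QChannelPolicy N) (ω : cfg.Ω) : ℕ → State M N :=
  AgingBandits.run cfg.mu sel pb (fun t m => cfg.A t m ω) (fun t => cfg.U t ω)
    (fun t => cfg.V t ω)

/-- The AoI `h_m(t) = t - τ_m(t)` of source `m` at (the beginning of) slot `t` under the
learning algorithm `(pa, pb)`. -/
noncomputable def Config.age (cfg : Config M N) (pa : SourcePolicy M)
    (pb : QChannelPolicy N) (ω : cfg.Ω) (t : ℕ) (m : Fin M) : ℕ :=
  t - (cfg.run (fun _ L => pa L) pb ω (t - 1)).tau m

/-- The channel `n(t)` selected in slot `t` by the learning algorithm `(pa, pb)`. -/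
noncomputable def Config.chan (cfg : Config M N) (pa : SourcePolicy M)
    (pb : QChannelPolicy N) (ω : cfg.Ω) (t : ℕ) : Fin N :=
  (cfg.run (fun _ L => pa L) pb ω t).selCh

/-- The expected total AoI `E[Σ_{m=1}^M Σ_{t=1}^T h_m(t)]` of the learning algorithm
`(pa, pb)`. -/
noncomputable def Config.expTotalAge (cfg : Config M N) (pa : SourcePolicy M)
    (pb : QChannelPolicy N) (T : ℕ) : ℝ :=
  ∑ m : Fin M, ∑ t ∈ Finset.Icc 1 T, ∫ ω, (cfg.age pa pb ω t m : ℝ) ∂cfg.P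

/-- The channel policy of the optimal (genie) algorithm `π*`: select the channel `n*` of
highest reliability in every slot. -/
def optChannel (N : ℕ) (nstar : Fin N) : QChannelPolicy N := fun _ _ _ => nstar

/-- The AoI regret `R^π(T)` of the algorithm `π = (pa, pb)` relative to the optimal
algorithm `π* = (paStar, n*)`. -/
noncomputable def Config.regret (cfg : Config M N) (nstar : Fin N)
    (paStar pa : SourcePolicy M) (pb : QChannelPolicy N) (T : ℕ) : ℝ :=
  cfg.expTotalAge pa pb T - cfg.expTotalAge paStar (optChannel N nstar) T

/-- The expected number of suboptimal channel choices
`E[K^π(T)] = Σ_{t=1}^T P(n(t) ≠ n*)` of the algorithm `(pa, pb)`. -/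
noncomputable def Config.expSubopt (cfg : Config M N) (nstar : Fin N)
    (pa : SourcePolicy M) (pb : QChannelPolicy N) (T : ℕ) : ℝ :=
  ∑ t ∈ Finset.Icc 1 T, (cfg.P {ω | cfg.chan pa pb ω t ≠ nstar}).toReal

end AgingBandits

namespace AgingBandits

/-- Empirical reliability estimate `μ̂_n` of channel `n` computed from the observation
history: the average of the observed states of channel `n` over the exploration slots
(slots in which the system was empty and a dummy packet was transmitted); `0` if channel
`n` has not been explored yet. -/
noncomputable def estimate {N : ℕ} (hist : List (Fin N × Bool × Bool)) (n : Fin N) : ℝ :=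
  let obs := hist.filterMap fun x => if x.1 = n ∧ x.2.2 = true then some x.2.1 else none
  if obs.length = 0 then 0 else (obs.count true : ℝ) / obs.length

/-- The queue-dependent channel policy `η̄_b` of the order-optimal learning algorithm
(Algorithm 2): when the system is empty, select a channel uniformly at random (using the
fresh uniform seed `v`) and use the transmitted dummy packet to update the empirical
estimates; when the system is nonempty, select the channel with the highest current
empirical estimate. -/
noncomputable def etabarB (N : ℕ) [NeZero N] : QChannelPolicy N :=
  fun hist empty v =>
    if empty then ⟨⌊v * N⌋₊ % N, Nat.mod_lt _ (Nat.pos_of_ne_zero (NeZero.ne N))⟩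
    else ((List.finRange N).argmax (estimate hist)).getD
      ⟨0, Nat.pos_of_ne_zero (NeZero.ne N)⟩

variable {M N : ℕ} [NeZero M] [NeZero N]

/-- The trajectory of the optimal algorithm `π* = (paStar, n*)`. -/
noncomputable def Config.optRun (cfg : Config M N) (paStar : SourcePolicy M)
    (nstar : Fin N) (ω : cfg.Ω) : ℕ → State M N :=
  cfg.run (fun _ L => paStar L) (optChannel N nstar) ω

/-- The trajectory of the auxiliary algorithm `η̂`: in every slot `t` it selects the same
source `m*(t)` as the optimal algorithm `π*` (transmitting a dummy packet if that source's
queue is empty) and the channel chosen by the policy `η̄_b`. -/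
noncomputable def Config.auxRun (cfg : Config M N) (paStar : SourcePolicy M)
    (nstar : Fin N) (ω : cfg.Ω) : ℕ → State M N :=
  cfg.run (fun t _ => (cfg.optRun paStar nstar ω t).selSrc) (etabarB N) ω

/-- The AoI `h^η̂_m(t)` of source `m` at slot `t` under the auxiliary algorithm `η̂`. -/
noncomputable def Config.auxAge (cfg : Config M N) (paStar : SourcePolicy M)
    (nstar : Fin N) (ω : cfg.Ω) (t : ℕ) (m : Fin M) : ℕ :=
  t - (cfg.auxRun paStar nstar ω (t - 1)).tau m

/-- The AoI `h^{π*}_m(t)` of source `m` at slot `t` under the optimal algorithm `π*`. -/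
noncomputable def Config.optAge (cfg : Config M N) (paStar : SourcePolicy M)
    (nstar : Fin N) (ω : cfg.Ω) (t : ℕ) (m : Fin M) : ℕ :=
  t - (cfg.optRun paStar nstar ω (t - 1)).tau m

/-- The first slot `s_p` of the `p`-th period (`p ≥ 1`) of the trajectory of the auxiliary
algorithm `η̂`: `s_1 = 1`, and `s_{p+1}` is the next slot `t` at which the system becomes
empty, i.e. `E(t-1) = 0` and `E(t) = 1`. -/
noncomputable def Config.periodStart (cfg : Config M N) (paStar : SourcePolicy M)
    (nstar : Fin N) (ω : cfg.Ω) : ℕ → ℕ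
  | 0 => 0
  | 1 => 1
  | p + 2 =>
      sInf {t | cfg.periodStart paStar nstar ω (p + 1) < t ∧
        (cfg.auxRun paStar nstar ω (t - 1)).emp = false ∧
        (cfg.auxRun paStar nstar ω t).emp = true}

/-- The last slot `f_p = s_{p+1} - 1` of the `p`-th period. -/
noncomputable def Config.periodEnd (cfg : Config M N) (paStar : SourcePolicy M)
    (nstar : Fin N) (ω : cfg.Ω) (p : ℕ) : ℕ :=
  cfg.periodStart paStar nstar ω (p + 1) - 1

/-- The channel `n̄(p)` used by the policy `η̄_b` throughout the nonempty phase of period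
`p`: the channel selected at the first nonempty slot of period `p` (the estimates, and
hence the selected channel, do not change during a nonempty phase). -/
noncomputable def Config.nbar (cfg : Config M N) (paStar : SourcePolicy M)
    (nstar : Fin N) (ω : cfg.Ω) (p : ℕ) : Fin N :=
  (cfg.auxRun paStar nstar ω
    (sInf {t | cfg.periodStart paStar nstar ω p ≤ t ∧
      (cfg.auxRun paStar nstar ω t).emp = false})).selCh

/-- The cumulative AoI `y^η̂_m(p) = Σ_{t=s_p}^{f_p} h^η̂_m(t)` of source `m` during period
`p` under the auxiliary algorithm `η̂`. -/
noncomputable def Config.periodAge (cfg : Config M N) (paStar : SourcePolicy M)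
    (nstar : Fin N) (ω : cfg.Ω) (p : ℕ) (m : Fin M) : ℕ :=
  ∑ t ∈ Finset.Icc (cfg.periodStart paStar nstar ω p) (cfg.periodEnd paStar nstar ω p),
    cfg.auxAge paStar nstar ω t m

end AgingBandits

namespace AgingBandits

set_option linter.unusedSectionVars false

variable {M N : ℕ} [NeZero M] [NeZero N]

lemma step_eq (mu : Fin N → ℝ) (sel : List (SrcObs M) → Fin M) (pb : QChannelPolicy N)
    (t : ℕ) (a : Fin M → Bool) (u v : ℝ) (s : State M N) :
    step mu sel pb t a u v s =
      (let q1 : Fin M → Option ℕ := fun m => if a m then some t else s.queue m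
       let obs : SrcObs M := ⟨a, fun m => t - s.tau m, q1⟩
       let empty : Bool := decide (∀ m, q1 m = none)
       let msel := sel (s.srcHist ++ [obs])
       let nsel := pb s.chHist empty v
       let isOn : Bool := decide (u ≤ mu nsel)
       if h : isOn = true ∧ (q1 msel).isSome = true then
         ⟨Function.update s.tau msel ((q1 msel).get h.2), Function.update q1 msel none,
           s.chHist ++ [(nsel, isOn, empty)], s.srcHist ++ [obs], nsel, msel, empty⟩
       else ⟨s.tau, q1, s.chHist ++ [(nsel, isOn, empty)], s.srcHist ++ [obs], nsel, msel, empty⟩) := by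
  unfold step
  dsimp only
  split
  · next g heq1 heq2 =>
    rw [dif_pos ⟨heq1, by simp [heq2]⟩]
    simp [heq2]
  · next h1 =>
    rw [dif_neg]
    rintro ⟨hOn, hSome⟩
    rcases hg : (if a (sel _) then some t else s.queue _) with _ | g
    · rw [hg] at hSome; simp at hSome
    · exact h1 g hOn hg


lemma dite_proj {α : Type*} {β : Sort*} (c : Prop) [Decidable c] (f : c → α) (g : ¬c → α)
    (π : α → β) (x : β) (hf : ∀ h, π (f h) = x) (hg : ∀ h, π (g h) = x) :
    π (dite c f g) = x := by
  split
  · exact hf _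
  · exact hg _

lemma step_selSrc (mu : Fin N → ℝ) (sel : List (SrcObs M) → Fin M) (pb : QChannelPolicy N)
    (t : ℕ) (a : Fin M → Bool) (u v : ℝ) (s : State M N) :
    (step mu sel pb t a u v s).selSrc =
      sel (s.srcHist ++ [⟨a, fun m => t - s.tau m, fun m => if a m then some t else s.queue m⟩]) := by
  rw [step_eq]; dsimp only
  exact dite_proj _ _ _ _ _ (fun _ => rfl) (fun _ => rfl)

lemma step_selCh (mu : Fin N → ℝ) (sel : List (SrcObs M) → Fin M) (pb : QChannelPolicy N)
    (t : ℕ) (a : Fin M → Bool) (u v : ℝ) (s : State M N) :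
    (step mu sel pb t a u v s).selCh =
      pb s.chHist (decide (∀ m, (if a m then some t else s.queue m) = none)) v := by
  rw [step_eq]; dsimp only
  exact dite_proj _ _ _ _ _ (fun _ => rfl) (fun _ => rfl)

lemma step_emp (mu : Fin N → ℝ) (sel : List (SrcObs M) → Fin M) (pb : QChannelPolicy N)
    (t : ℕ) (a : Fin M → Bool) (u v : ℝ) (s : State M N) :
    (step mu sel pb t a u v s).emp = decide (∀ m, (if a m then some t else s.queue m) = none) := by
  rw [step_eq]; dsimp only
  exact dite_proj _ _ _ _ _ (fun _ => rfl) (fun _ => rfl)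

lemma step_chHist (mu : Fin N → ℝ) (sel : List (SrcObs M) → Fin M) (pb : QChannelPolicy N)
    (t : ℕ) (a : Fin M → Bool) (u v : ℝ) (s : State M N) :
    (step mu sel pb t a u v s).chHist = s.chHist ++
      [(pb s.chHist (decide (∀ m, (if a m then some t else s.queue m) = none)) v,
        decide (u ≤ mu (pb s.chHist (decide (∀ m, (if a m then some t else s.queue m) = none)) v)),
        decide (∀ m, (if a m then some t else s.queue m) = none))] := by
  rw [step_eq]; dsimp only
  exact dite_proj _ _ _ _ _ (fun _ => rfl) (fun _ => rfl)

/-- The per-source relation between the auxiliary state and the optimal state. -/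
def RelS (sa so : State M N) (m : Fin M) : Prop :=
  (sa.tau m = so.tau m ∧ sa.queue m = so.queue m) ∨
  (sa.queue m = some (so.tau m) ∧ so.queue m = none) ∨
  (∃ h, sa.queue m = some h ∧ so.queue m = some h)

section Main

variable (cfg : Config M N) (paStar : SourcePolicy M) (nstar : Fin N) (ω : cfg.Ω)

lemma optRun_zero : cfg.optRun paStar nstar ω 0 = initState M N := rfl

lemma auxRun_zero : cfg.auxRun paStar nstar ω 0 = initState M N := rfl

lemma optRun_succ (t : ℕ) :
    cfg.optRun paStar nstar ω (t + 1) =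
      step cfg.mu (fun L => paStar L) (optChannel N nstar) (t + 1)
        (fun m => cfg.A (t + 1) m ω) (cfg.U (t + 1) ω) (cfg.V (t + 1) ω)
        (cfg.optRun paStar nstar ω t) := rfl

lemma auxRun_succ (t : ℕ) :
    cfg.auxRun paStar nstar ω (t + 1) =
      step cfg.mu (fun _ => (cfg.optRun paStar nstar ω (t + 1)).selSrc) (etabarB N) (t + 1)
        (fun m => cfg.A (t + 1) m ω) (cfg.U (t + 1) ω) (cfg.V (t + 1) ω)
        (cfg.auxRun paStar nstar ω t) := rfl

lemma step_cases (mu : Fin N → ℝ) (sel : List (SrcObs M) → Fin M) (pb : QChannelPolicy N)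
    (t : ℕ) (a : Fin M → Bool) (u v : ℝ) (s : State M N)
    (q1 : Fin M → Option ℕ) (hq1 : ∀ m, q1 m = if a m then some t else s.queue m)
    (msel : Fin M) (hmsel : msel = sel (s.srcHist ++ [⟨a, fun m => t - s.tau m, q1⟩]))
    (isOn : Bool)
    (hisOn : isOn = decide (u ≤ mu (pb s.chHist (decide (∀ m, q1 m = none)) v))) :
    (∃ g, isOn = true ∧ q1 msel = some g ∧
        (step mu sel pb t a u v s).tau = Function.update s.tau msel g ∧
        (step mu sel pb t a u v s).queue = Function.update q1 msel none) ∨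
    ((isOn = false ∨ q1 msel = none) ∧
        (step mu sel pb t a u v s).tau = s.tau ∧
        (step mu sel pb t a u v s).queue = q1) := by
  have hq1' : q1 = fun m => if a m then some t else s.queue m := funext hq1
  rw [step_eq]; dsimp only
  simp only [← hq1, ← hq1']
  simp only [← hmsel]
  simp only [← hisOn]
  by_cases h : isOn = true ∧ (q1 msel).isSome = true
  · rw [dif_pos h]
    rcases Option.isSome_iff_exists.mp h.2 with ⟨g, hg⟩
    exact Or.inl ⟨g, h.1, hg, by simp [hg], rfl⟩
  · rw [dif_neg h]
    refine Or.inr ⟨?_, rfl, rfl⟩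
    rcases Bool.eq_false_or_eq_true isOn with h1 | h1
    · rcases ho : q1 msel with _ | g
      · exact Or.inr rfl
      · exact absurd ⟨h1, by simp [ho]⟩ h
    · exact Or.inl h1

/-- The per-source relation between the auxiliary state and the optimal state. -/
lemma relS_step (mu : Fin N → ℝ) (selA selO : List (SrcObs M) → Fin M)
    (pbA pbO : QChannelPolicy N) (t : ℕ) (a : Fin M → Bool) (u v : ℝ)
    (sa so : State M N)
    (hmsel : selA (sa.srcHist ++ [⟨a, fun m => t - sa.tau m,
        fun m => if a m then some t else sa.queue m⟩])
      = selO (so.srcHist ++ [⟨a, fun m => t - so.tau m,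
        fun m => if a m then some t else so.queue m⟩]))
    (hch : mu (pbA sa.chHist (decide (∀ m, (if a m then some t else sa.queue m) = none)) v)
         ≤ mu (pbO so.chHist (decide (∀ m, (if a m then some t else so.queue m) = none)) v))
    (hrel : ∀ m, RelS sa so m) (m : Fin M) :
    RelS (step mu selA pbA t a u v sa) (step mu selO pbO t a u v so) m := by
  set q1A : Fin M → Option ℕ := fun m => if a m then some t else sa.queue m with hq1A
  set q1O : Fin M → Option ℕ := fun m => if a m then some t else so.queue m with hq1O
  set m0 : Fin M := selO (so.srcHist ++ [⟨a, fun m => t - so.tau m, q1O⟩]) with hm0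
  set onA := decide (u ≤ mu (pbA sa.chHist (decide (∀ m, q1A m = none)) v)) with honA
  set onO := decide (u ≤ mu (pbO so.chHist (decide (∀ m, q1O m = none)) v)) with honO
  have hAc := step_cases mu selA pbA t a u v sa q1A (fun _ => rfl) m0
    (by rw [hmsel]) onA rfl
  have hOc := step_cases mu selO pbO t a u v so q1O (fun _ => rfl) m0 rfl onO rfl
  have hchain : onA = true → onO = true := by
    intro h
    rw [honA, decide_eq_true_iff] at h
    rw [honO, decide_eq_true_iff]
    exact le_trans h hch
  set SA := step mu selA pbA t a u v sa
  set SO := step mu selO pbO t a u v so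
  by_cases hm : m = m0
  · subst hm
    have key : (q1A m0 = q1O m0) ∨ (q1A m0 = some (so.tau m0) ∧ q1O m0 = none) := by
      by_cases ham : a m0
      · left; simp [hq1A, hq1O, ham]
      · rcases hrel m0 with ⟨_, hq⟩ | ⟨h1, h2⟩ | ⟨g, h1, h2⟩
        · left; simp [hq1A, hq1O, ham, hq]
        · right; simp [hq1A, hq1O, ham, h1, h2]
        · left; simp [hq1A, hq1O, ham, h1, h2]
    rcases key with hkey | ⟨hk1, hk2⟩
    · rcases hv : q1O m0 with _ | g
      · -- both empty at m0: no delivery on either side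
        have hvA : q1A m0 = none := by rw [hkey, hv]
        have hA' : SA.tau = sa.tau ∧ SA.queue = q1A := by
          rcases hAc with ⟨g, _, hsome, _⟩ | ⟨_, h1, h2⟩
          · rw [hvA] at hsome; exact absurd hsome (by simp)
          · exact ⟨h1, h2⟩
        have hO' : SO.tau = so.tau ∧ SO.queue = q1O := by
          rcases hOc with ⟨g, _, hsome, _⟩ | ⟨_, h1, h2⟩
          · rw [hv] at hsome; exact absurd hsome (by simp)
          · exact ⟨h1, h2⟩
        have ham : a m0 = false := by
          by_contra h
          rw [Bool.not_eq_false] at h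
          simp [hq1A, h] at hvA
        have hsaq : sa.queue m0 = none := by simpa [hq1A, ham] using hvA
        rcases hrel m0 with ⟨h1, h2⟩ | ⟨h1, h2⟩ | ⟨g, h1, h2⟩
        · exact Or.inl ⟨by rw [hA'.1, hO'.1, h1], by rw [hA'.2, hO'.2, hkey]⟩
        · rw [hsaq] at h1; exact absurd h1 (by simp)
        · rw [hsaq] at h1; exact absurd h1 (by simp)
      · -- both queues hold some g at the selected source
        have hvA : q1A m0 = some g := by rw [hkey, hv]
        rcases hAc with ⟨gA, honAt, hsomeA, htauA, hqA⟩ | ⟨hcond, htauA, hqA⟩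
        · -- aux delivers, hence opt delivers too
          have hgA : gA = g := by rw [hvA] at hsomeA; exact (Option.some_inj.mp hsomeA).symm
          have honOt : onO = true := hchain honAt
          rcases hOc with ⟨gO, _, hsomeO, htauO, hqO⟩ | ⟨hcond, _, _⟩
          · have hgO : gO = g := by rw [hv] at hsomeO; exact (Option.some_inj.mp hsomeO).symm
            refine Or.inl ⟨?_, ?_⟩
            · rw [htauA, htauO, hgA, hgO]; simp [Function.update_self]
            · rw [hqA, hqO]; simp [Function.update_self]
          · rcases hcond with h1 | h1
            · rw [honOt] at h1; exact absurd h1 (by simp)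
            · rw [hv] at h1; exact absurd h1 (by simp)
        · -- aux does not deliver
          have hAq : SA.queue m0 = some g := by rw [hqA, hvA]
          rcases hOc with ⟨gO, _, hsomeO, htauO, hqO⟩ | ⟨_, htauO, hqO⟩
          · -- opt delivers: desync state D
            have hgO : gO = g := by rw [hv] at hsomeO; exact (Option.some_inj.mp hsomeO).symm
            refine Or.inr (Or.inl ⟨?_, ?_⟩)
            · rw [hAq, htauO, hgO]; simp [Function.update_self]
            · rw [hqO]; simp [Function.update_self]
          · -- neither delivers: D'
            exact Or.inr (Or.inr ⟨g, hAq, by rw [hqO, hv]⟩)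
    · -- state D at the selected source, no arrival
      have hO' : SO.tau = so.tau ∧ SO.queue = q1O := by
        rcases hOc with ⟨g, _, hsome, _⟩ | ⟨_, h1, h2⟩
        · rw [hk2] at hsome; exact absurd hsome (by simp)
        · exact ⟨h1, h2⟩
      rcases hAc with ⟨gA, _, hsomeA, htauA, hqA⟩ | ⟨_, htauA, hqA⟩
      · -- aux delivers the packet opt already delivered: full resync
        have hgA : gA = so.tau m0 := by rw [hk1] at hsomeA; exact (Option.some_inj.mp hsomeA).symm
        refine Or.inl ⟨?_, ?_⟩
        · rw [htauA, hO'.1, hgA]; simp [Function.update_self]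
        · rw [hqA, hO'.2, hk2]; simp [Function.update_self]
      · -- aux does not deliver: still D
        refine Or.inr (Or.inl ⟨?_, ?_⟩)
        · rw [hqA, hO'.1, hk1]
        · rw [hO'.2, hk2]
  · -- m not selected: tau unchanged, queue becomes q1
    have hA' : SA.tau m = sa.tau m ∧ SA.queue m = q1A m := by
      rcases hAc with ⟨g, _, _, htau, hq⟩ | ⟨_, htau, hq⟩
      · rw [htau, hq]; exact ⟨Function.update_of_ne hm _ _, Function.update_of_ne hm _ _⟩
      · rw [htau, hq]; exact ⟨rfl, rfl⟩
    have hO' : SO.tau m = so.tau m ∧ SO.queue m = q1O m := by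
      rcases hOc with ⟨g, _, _, htau, hq⟩ | ⟨_, htau, hq⟩
      · rw [htau, hq]; exact ⟨Function.update_of_ne hm _ _, Function.update_of_ne hm _ _⟩
      · rw [htau, hq]; exact ⟨rfl, rfl⟩
    by_cases ham : a m
    · exact Or.inr (Or.inr ⟨t, by rw [hA'.2]; simp [hq1A, ham],
        by rw [hO'.2]; simp [hq1O, ham]⟩)
    · have hqa : q1A m = sa.queue m := by simp [hq1A, ham]
      have hqo : q1O m = so.queue m := by simp [hq1O, ham]
      rcases hrel m with ⟨h1, h2⟩ | ⟨h1, h2⟩ | ⟨g, h1, h2⟩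
      · exact Or.inl ⟨by rw [hA'.1, hO'.1, h1], by rw [hA'.2, hO'.2, hqa, hqo, h2]⟩
      · exact Or.inr (Or.inl ⟨by rw [hA'.2, hqa, hO'.1, h1], by rw [hO'.2, hqo, h2]⟩)
      · exact Or.inr (Or.inr ⟨g, by rw [hA'.2, hqa, h1], by rw [hO'.2, hqo, h2]⟩)

lemma rel_run (hle : ∀ n, cfg.mu n ≤ cfg.mu nstar) :
    ∀ t m, RelS (cfg.auxRun paStar nstar ω t) (cfg.optRun paStar nstar ω t) m := by
  intro t
  induction t with
  | zero => exact fun m => Or.inl ⟨rfl, rfl⟩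
  | succ t ih =>
    rw [auxRun_succ, optRun_succ]
    refine relS_step _ _ _ _ _ _ _ _ _ _ _ ?_ ?_ ih
    · rw [step_selSrc]
    · exact hle _

lemma sync_step (mu : Fin N → ℝ) (selA selO : List (SrcObs M) → Fin M)
    (pbA pbO : QChannelPolicy N) (t : ℕ) (a : Fin M → Bool) (u v : ℝ)
    (sa so : State M N)
    (hmsel : selA (sa.srcHist ++ [⟨a, fun m => t - sa.tau m,
        fun m => if a m then some t else sa.queue m⟩])
      = selO (so.srcHist ++ [⟨a, fun m => t - so.tau m,
        fun m => if a m then some t else so.queue m⟩]))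
    (htau : sa.tau = so.tau) (hq : sa.queue = so.queue)
    (hch : (∃ m, (if a m then some t else sa.queue m) ≠ none) →
        mu (pbA sa.chHist (decide (∀ m, (if a m then some t else sa.queue m) = none)) v)
        = mu (pbO so.chHist (decide (∀ m, (if a m then some t else so.queue m) = none)) v)) :
    (step mu selA pbA t a u v sa).tau = (step mu selO pbO t a u v so).tau ∧
    (step mu selA pbA t a u v sa).queue = (step mu selO pbO t a u v so).queue := by
  set q1A : Fin M → Option ℕ := fun m => if a m then some t else sa.queue m with hq1A
  set q1O : Fin M → Option ℕ := fun m => if a m then some t else so.queue m with hq1O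
  have hq1 : q1A = q1O := by rw [hq1A, hq1O, hq]
  set m0 : Fin M := selO (so.srcHist ++ [⟨a, fun m => t - so.tau m, q1O⟩]) with hm0
  set onA := decide (u ≤ mu (pbA sa.chHist (decide (∀ m, q1A m = none)) v)) with honA
  set onO := decide (u ≤ mu (pbO so.chHist (decide (∀ m, q1O m = none)) v)) with honO
  have hAc := step_cases mu selA pbA t a u v sa q1A (fun _ => rfl) m0
    (by rw [hmsel]) onA rfl
  have hOc := step_cases mu selO pbO t a u v so q1O (fun _ => rfl) m0 rfl onO rfl
  rcases hv : q1O m0 with _ | g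
  · have hvA : q1A m0 = none := by rw [hq1, hv]
    have hA' : (step mu selA pbA t a u v sa).tau = sa.tau ∧
        (step mu selA pbA t a u v sa).queue = q1A := by
      rcases hAc with ⟨g, _, hsome, _⟩ | ⟨_, h1, h2⟩
      · rw [hvA] at hsome; exact absurd hsome (by simp)
      · exact ⟨h1, h2⟩
    have hO' : (step mu selO pbO t a u v so).tau = so.tau ∧
        (step mu selO pbO t a u v so).queue = q1O := by
      rcases hOc with ⟨g, _, hsome, _⟩ | ⟨_, h1, h2⟩
      · rw [hv] at hsome; exact absurd hsome (by simp)
      · exact ⟨h1, h2⟩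
    exact ⟨by rw [hA'.1, hO'.1, htau], by rw [hA'.2, hO'.2, hq1]⟩
  · have hvA : q1A m0 = some g := by rw [hq1, hv]
    have hon : onA = onO := by
      rw [honA, honO, hch ⟨m0, by show q1A m0 ≠ none; rw [hvA]; simp⟩]
    rcases hAc with ⟨gA, honAt, hsomeA, htauA, hqA⟩ | ⟨hcondA, htauA, hqA⟩
    · have honOt : onO = true := by rw [← hon]; exact honAt
      rcases hOc with ⟨gO, _, hsomeO, htauO, hqO⟩ | ⟨hcondO, _, _⟩
      · have e1 : gA = g := by rw [hsomeA] at hvA; exact Option.some_inj.mp hvA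
        have e2 : gO = g := by rw [hsomeO] at hv; exact Option.some_inj.mp hv
        rw [htauA, htauO, hqA, hqO, htau, hq1, e1, e2]
        exact ⟨rfl, rfl⟩
      · rcases hcondO with h1 | h1
        · rw [honOt] at h1; exact absurd h1 (by simp)
        · rw [hv] at h1; exact absurd h1 (by simp)
    · have honAf : onA = false := by
        rcases hcondA with h1 | h1
        · exact h1
        · rw [hvA] at h1; exact absurd h1 (by simp)
      have honOf : onO = false := by rw [← hon]; exact honAf
      have hO' : (step mu selO pbO t a u v so).tau = so.tau ∧
        (step mu selO pbO t a u v so).queue = q1O := by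
        rcases hOc with ⟨gO, honOt, _, _, _⟩ | ⟨_, h1, h2⟩
        · rw [honOf] at honOt; exact absurd honOt (by simp)
        · exact ⟨h1, h2⟩
      exact ⟨by rw [htauA, hO'.1, htau], by rw [hqA, hO'.2, hq1]⟩

end Main

lemma estimate_append_false (hist : List (Fin N × Bool × Bool)) (c : Fin N) (b : Bool) :
    estimate (hist ++ [(c, b, false)]) = estimate hist := by
  funext n
  unfold estimate
  simp [List.filterMap_append]
end AgingBandits

namespace AgingBandits

/-- **Optimal periods contribute nothing (Lemma 4 / Lemma A.1).**
If period `p` is an optimal period, i.e. `n̄(p) = n*`, then at every slot `t` within period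
`p` (`s_p ≤ t ≤ f_p`) and for every source `m`, the AoI under the auxiliary algorithm `η̂`
equals the AoI under the optimal algorithm `π*`: `h^η̂_m(t) = h^{π*}_m(t)`. -/
theorem optimal_period_age_equal
    {M N : ℕ} [NeZero M] [NeZero N] (hM : 1 ≤ M) (hN : 2 ≤ N)
    (cfg : Config M N) (nstar : Fin N)
    (hstar : ∀ n, n ≠ nstar → cfg.mu n < cfg.mu nstar)
    (paStar : SourcePolicy M) (hWCstar : WorkConserving paStar)
    (ω : cfg.Ω) (p : ℕ) (hp : 1 ≤ p)
    (hopt : cfg.nbar paStar nstar ω p = nstar) :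
    ∀ t : ℕ, cfg.periodStart paStar nstar ω p ≤ t → t ≤ cfg.periodEnd paStar nstar ω p →
      ∀ m : Fin M, cfg.auxAge paStar nstar ω t m = cfg.optAge paStar nstar ω t m := by
  have hle : ∀ n, cfg.mu n ≤ cfg.mu nstar := by
    intro n
    by_cases h : n = nstar
    · rw [h]
    · exact (hstar n h).le
  -- abbreviations (as plain terms)
  -- per-slot facts about the auxiliary run
  have hemp : ∀ t : ℕ, (cfg.auxRun paStar nstar ω (t + 1)).emp =
      decide (∀ m, (if cfg.A (t + 1) m ω then some (t + 1)
        else (cfg.auxRun paStar nstar ω t).queue m) = none) := by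
    intro t; rw [auxRun_succ, step_emp]
  have hselCh : ∀ t : ℕ, (cfg.auxRun paStar nstar ω (t + 1)).selCh =
      etabarB N (cfg.auxRun paStar nstar ω t).chHist
        ((cfg.auxRun paStar nstar ω (t + 1)).emp) (cfg.V (t + 1) ω) := by
    intro t; rw [hemp, auxRun_succ, step_selCh]
  have hest : ∀ t : ℕ, (cfg.auxRun paStar nstar ω (t + 1)).emp = false →
      estimate (cfg.auxRun paStar nstar ω (t + 1)).chHist =
      estimate (cfg.auxRun paStar nstar ω t).chHist := by
    intro t hf
    rw [auxRun_succ, step_chHist]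
    have hE : decide (∀ m, (if cfg.A (t + 1) m ω then some (t + 1)
        else (cfg.auxRun paStar nstar ω t).queue m) = none) = false := by
      rw [← hemp t]; exact hf
    rw [hE]
    exact estimate_append_false _ _ _
  have hemp0 : (cfg.auxRun paStar nstar ω 0).emp = true := rfl
  -- the start of period p+1
  have hS2 : cfg.periodStart paStar nstar ω (p + 1) =
      sInf {t | cfg.periodStart paStar nstar ω p < t ∧
        (cfg.auxRun paStar nstar ω (t - 1)).emp = false ∧
        (cfg.auxRun paStar nstar ω t).emp = true} := by
    rcases p with _ | q
    · omega
    · rfl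
  have hfp : cfg.periodEnd paStar nstar ω p =
      sInf {t | cfg.periodStart paStar nstar ω p < t ∧
        (cfg.auxRun paStar nstar ω (t - 1)).emp = false ∧
        (cfg.auxRun paStar nstar ω t).emp = true} - 1 := by
    unfold Config.periodEnd
    rw [hS2]
  -- once the system becomes nonempty within the period, it stays nonempty
  have htrans : ∀ s, cfg.periodStart paStar nstar ω p < s →
      s ≤ cfg.periodEnd paStar nstar ω p →
      (cfg.auxRun paStar nstar ω (s - 1)).emp = false →
      (cfg.auxRun paStar nstar ω s).emp = false := by
    intro s h1 h2 h3
    by_contra h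
    rw [Bool.not_eq_false] at h
    have hmem : s ∈ {t | cfg.periodStart paStar nstar ω p < t ∧
        (cfg.auxRun paStar nstar ω (t - 1)).emp = false ∧
        (cfg.auxRun paStar nstar ω t).emp = true} := ⟨h1, h3, h⟩
    have hles := Nat.sInf_le hmem
    rw [hfp] at h2
    omega
  -- all slots between the first nonempty slot and a nonempty slot are nonempty
  have hT0 : cfg.nbar paStar nstar ω p =
      (cfg.auxRun paStar nstar ω (sInf {t | cfg.periodStart paStar nstar ω p ≤ t ∧
        (cfg.auxRun paStar nstar ω t).emp = false})).selCh := rfl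
  have hnonempty : ∀ s, s ≤ cfg.periodEnd paStar nstar ω p →
      cfg.periodStart paStar nstar ω p ≤ s →
      (cfg.auxRun paStar nstar ω s).emp = false →
      ∀ j, sInf {t | cfg.periodStart paStar nstar ω p ≤ t ∧
        (cfg.auxRun paStar nstar ω t).emp = false} ≤ j → j ≤ s →
      (cfg.auxRun paStar nstar ω j).emp = false := by
    intro s hs1 hs2 hs3
    have hmem : s ∈ {t | cfg.periodStart paStar nstar ω p ≤ t ∧
        (cfg.auxRun paStar nstar ω t).emp = false} := ⟨hs2, hs3⟩
    have hT0mem := Nat.sInf_mem ⟨s, hmem⟩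
    have hTa : cfg.periodStart paStar nstar ω p ≤
        sInf {t | cfg.periodStart paStar nstar ω p ≤ t ∧
          (cfg.auxRun paStar nstar ω t).emp = false} := hT0mem.1
    intro j hj
    induction j, hj using Nat.le_induction with
    | base => exact fun _ => hT0mem.2
    | succ n hn ih =>
      intro hn1
      exact htrans (n + 1) (by omega) (by omega) (by simpa using ih (by omega))
  -- nonempty slots of the period select the optimal channel
  have hchan : ∀ s, cfg.periodStart paStar nstar ω p - 1 < s → s ≤ cfg.periodEnd paStar nstar ω p →
      (cfg.auxRun paStar nstar ω s).emp = false → (cfg.auxRun paStar nstar ω s).selCh = nstar := by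
    intro s h1 h2 h3
    have hs0 : s ≠ 0 := by
      rintro rfl
      rw [hemp0] at h3
      cases h3
    obtain ⟨k, rfl⟩ := Nat.exists_eq_succ_of_ne_zero hs0
    have hsp : cfg.periodStart paStar nstar ω p ≤ k + 1 := by omega
    have hmem : (k + 1) ∈ {t | cfg.periodStart paStar nstar ω p ≤ t ∧ (cfg.auxRun paStar nstar ω t).emp = false} := ⟨hsp, h3⟩
    have hT0mem := Nat.sInf_mem ⟨k + 1, hmem⟩
    have hT0le : sInf {t | cfg.periodStart paStar nstar ω p ≤ t ∧ (cfg.auxRun paStar nstar ω t).emp = false} ≤ k + 1 := Nat.sInf_le hmem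
    have hT0a : cfg.periodStart paStar nstar ω p ≤ sInf {t | cfg.periodStart paStar nstar ω p ≤ t ∧ (cfg.auxRun paStar nstar ω t).emp = false} := hT0mem.1
    have hT0b : (cfg.auxRun paStar nstar ω (sInf {t | cfg.periodStart paStar nstar ω p ≤ t ∧ (cfg.auxRun paStar nstar ω t).emp = false})).emp = false := hT0mem.2
    have hT0pos : sInf {t | cfg.periodStart paStar nstar ω p ≤ t ∧ (cfg.auxRun paStar nstar ω t).emp = false} ≠ 0 := by
      intro h
      rw [h, hemp0] at hT0b
      cases hT0b
    obtain ⟨k0, hk0⟩ := Nat.exists_eq_succ_of_ne_zero hT0pos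
    rw [Nat.succ_eq_add_one] at hk0
    have hne := hnonempty (k + 1) h2 hsp h3
    rw [hk0] at hT0b hT0le hT0a hne
    have hconst : ∀ j, k0 ≤ j → j ≤ k →
        estimate (cfg.auxRun paStar nstar ω j).chHist = estimate (cfg.auxRun paStar nstar ω k0).chHist := by
      intro j hj
      induction j, hj using Nat.le_induction with
      | base => exact fun _ => rfl
      | succ n hn ih =>
        intro hns
        rw [hest n (hne (n + 1) (by omega) (by omega)), ih (by omega)]
    have e1 : (cfg.auxRun paStar nstar ω (k + 1)).selCh =
        etabarB N (cfg.auxRun paStar nstar ω k).chHist false (cfg.V (k + 1) ω) := by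
      rw [hselCh k, h3]
    have e2 : (cfg.auxRun paStar nstar ω (k0 + 1)).selCh =
        etabarB N (cfg.auxRun paStar nstar ω k0).chHist false (cfg.V (k0 + 1) ω) := by
      rw [hselCh k0, hT0b]
    have hnb : etabarB N (cfg.auxRun paStar nstar ω k0).chHist false (cfg.V (k0 + 1) ω)
        = nstar := by
      rw [← e2, ← hk0, ← hT0]
      exact hopt
    rw [e1]
    simp only [etabarB, Bool.false_eq_true, if_false] at hnb ⊢
    rw [hconst k (by omega) (by omega)]
    exact hnb
  -- synchronization at the start of the period
  have hsyncbase : (cfg.auxRun paStar nstar ω (cfg.periodStart paStar nstar ω p - 1)).tau = (cfg.optRun paStar nstar ω (cfg.periodStart paStar nstar ω p - 1)).tau ∧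
      (cfg.auxRun paStar nstar ω (cfg.periodStart paStar nstar ω p - 1)).queue = (cfg.optRun paStar nstar ω (cfg.periodStart paStar nstar ω p - 1)).queue := by
    rcases Nat.lt_or_ge (cfg.periodStart paStar nstar ω p) 2 with hlt | hge
    · have h0 : cfg.periodStart paStar nstar ω p - 1 = 0 := by omega
      rw [h0]
      exact ⟨rfl, rfl⟩
    · rcases p with _ | _ | q
      · omega
      · have h1 : cfg.periodStart paStar nstar ω (0 + 1) = 1 := rfl
        omega
      · have hdef : cfg.periodStart paStar nstar ω (q + 1 + 1) =
            sInf {t | cfg.periodStart paStar nstar ω (q + 1) < t ∧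
              (cfg.auxRun paStar nstar ω (t - 1)).emp = false ∧ (cfg.auxRun paStar nstar ω t).emp = true} := rfl
        have hposne : {t | cfg.periodStart paStar nstar ω (q + 1) < t ∧
            (cfg.auxRun paStar nstar ω (t - 1)).emp = false ∧ (cfg.auxRun paStar nstar ω t).emp = true}.Nonempty :=
          Nat.nonempty_of_pos_sInf (by rw [← hdef]; omega)
        have hmem := Nat.sInf_mem hposne
        rw [← hdef] at hmem
        have hempt : (cfg.auxRun paStar nstar ω (cfg.periodStart paStar nstar ω (q + 1 + 1))).emp = true := hmem.2.2
        have hsp1 : cfg.periodStart paStar nstar ω (q + 1 + 1) =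
            (cfg.periodStart paStar nstar ω (q + 1 + 1) - 1) + 1 := by omega
        rw [hsp1, hemp] at hempt
        have hall := of_decide_eq_true hempt
        have hqnone : ∀ m, (cfg.auxRun paStar nstar ω (cfg.periodStart paStar nstar ω (q + 1 + 1) - 1)).queue m = none := by
          intro m
          have hm := hall m
          by_cases ha : cfg.A ((cfg.periodStart paStar nstar ω (q + 1 + 1) - 1) + 1) m ω = true
          · rw [if_pos ha] at hm
            cases hm
          · rw [if_neg ha] at hm
            exact hm
        constructor
        · funext m
          rcases rel_run cfg paStar nstar ω hle (cfg.periodStart paStar nstar ω (q + 1 + 1) - 1) m with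
            ⟨h1, h2⟩ | ⟨h1, h2⟩ | ⟨g, h1, h2⟩
          · exact h1
          · rw [hqnone m] at h1
            cases h1
          · rw [hqnone m] at h1
            cases h1
        · funext m
          rcases rel_run cfg paStar nstar ω hle (cfg.periodStart paStar nstar ω (q + 1 + 1) - 1) m with
            ⟨h1, h2⟩ | ⟨h1, h2⟩ | ⟨g, h1, h2⟩
          · exact h2
          · rw [hqnone m] at h1
            cases h1
          · rw [hqnone m] at h1
            cases h1
  -- the two trajectories coincide throughout the period
  have hsync : ∀ t, cfg.periodStart paStar nstar ω p - 1 ≤ t → t ≤ cfg.periodEnd paStar nstar ω p →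
      (cfg.auxRun paStar nstar ω t).tau = (cfg.optRun paStar nstar ω t).tau ∧ (cfg.auxRun paStar nstar ω t).queue = (cfg.optRun paStar nstar ω t).queue := by
    intro t ht
    induction t, ht using Nat.le_induction with
    | base => exact fun _ => hsyncbase
    | succ t ht ih =>
      intro htfp
      have ihh := ih (by omega)
      rw [auxRun_succ, optRun_succ]
      refine sync_step _ _ _ _ _ _ _ _ _ _ _ ?_ ihh.1 ihh.2 ?_
      · rw [step_selSrc]
      · rintro ⟨m, hm⟩
        have hempf : (cfg.auxRun paStar nstar ω (t + 1)).emp = false := by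
          rw [hemp]
          apply decide_eq_false
          intro hallm
          exact hm (hallm m)
        have hsc := hchan (t + 1) (by omega) htfp hempf
        have e3 : etabarB N (cfg.auxRun paStar nstar ω t).chHist
            (decide (∀ m, (if cfg.A (t + 1) m ω then some (t + 1)
              else (cfg.auxRun paStar nstar ω t).queue m) = none)) (cfg.V (t + 1) ω) = (cfg.auxRun paStar nstar ω (t + 1)).selCh := by
          rw [hselCh, hemp]
        rw [e3, hsc]
        rfl
  intro t ht1 ht2 m
  have hs := hsync (t - 1) (by omega) (by omega)
  show t - (cfg.auxRun paStar nstar ω (t - 1)).tau m = t - (cfg.optRun paStar nstar ω (t - 1)).tau m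
  rw [hs.1]

end AgingBandits
end

section
/- Consider k exploration slots in which a channel is selected uniformly at random: let X_1,…,X_k be i.i.d. uniform on {1,…,N}, and independently let Y_1,…,Y_k be i.i.d. Bernoulli(μ_n) (the state of channel n in each slot). Let S = #{i : X_i = n} and let μ̂_n = (1/S)·Σ_{i : X_i = n} Y_i (with μ̂_n = 0 if S = 0) be the empirical reliability estimate of channel n. Then for any Δ > 0, P(μ̂_n − μ_n ≥ Δ/2) ≤ exp(−k/(2N²)) + exp(−Δ²·k/(4N)). -/
open Real Finset

section Aux

lemma bernoulli_d_pos {q : ℝ} (h0 : 0 ≤ q) (h1 : q ≤ 1) (t : ℝ) :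
    0 < 1 - q + q * Real.exp t := by
  rcases le_or_gt (Real.exp t) 1 with he | he
  · nlinarith [Real.exp_pos t, mul_nonneg (sub_nonneg.2 h1) (sub_nonneg.2 he)]
  · nlinarith [mul_nonneg h0 (sub_nonneg.2 he.le)]

/-- Hoeffding's lemma for a Bernoulli mgf. -/
lemma bernoulli_mgf_le {q : ℝ} (h0 : 0 ≤ q) (h1 : q ≤ 1) (t : ℝ) :
    1 - q + q * Real.exp t ≤ Real.exp (q * t + t ^ 2 / 8) := by
  set d : ℝ → ℝ := fun t => 1 - q + q * Real.exp t with hdDef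
  have hd : ∀ t, 0 < d t := by
    intro t
    show 0 < 1 - q + q * Real.exp t
    rcases le_or_gt (Real.exp t) 1 with he | he
    · nlinarith [Real.exp_pos t, mul_nonneg (sub_nonneg.2 h1) (sub_nonneg.2 he)]
    · nlinarith [mul_nonneg h0 (sub_nonneg.2 he.le)]
  have hdd : ∀ t, HasDerivAt d (q * Real.exp t) t := by
    intro t
    exact ((Real.hasDerivAt_exp t).const_mul q).const_add (1 - q)
  set h : ℝ → ℝ := fun t => q * t + t ^ 2 / 8 - Real.log (d t) with hhDef
  set φ : ℝ → ℝ := fun t => q + t / 4 - q * Real.exp t / d t with hφDef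
  have hh : ∀ t, HasDerivAt h (φ t) t := by
    intro t
    have h1' : HasDerivAt (fun t : ℝ => q * t + t ^ 2 / 8) (q + 2 * t / 8) t := by
      exact (((hasDerivAt_id' t).const_mul q).add ((hasDerivAt_pow 2 t).div_const 8)).congr_deriv
        (by norm_num)
    have h2' : HasDerivAt (fun t => Real.log (d t)) (q * Real.exp t / d t) t :=
      (hdd t).log (hd t).ne'
    have := h1'.sub h2'
    refine this.congr_deriv ?_
    simp only [hφDef]
    ring
  have hφ : ∀ t, HasDerivAt φ (1 / 4 - q * Real.exp t * (1 - q) / (d t) ^ 2) t := by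
    intro t
    have h1' : HasDerivAt (fun t : ℝ => q + t / 4) (1 / 4) t := by
      simpa using ((hasDerivAt_id t).div_const 4).const_add q
    have h2' : HasDerivAt (fun t => q * Real.exp t / d t)
        ((q * Real.exp t * d t - q * Real.exp t * (q * Real.exp t)) / (d t) ^ 2) t :=
      ((Real.hasDerivAt_exp t).const_mul q).div (hdd t) (hd t).ne'
    have := h1'.sub h2'
    refine this.congr_deriv ?_
    have : d t = 1 - q + q * Real.exp t := rfl
    rw [this]
    ring
  have hφmono : Monotone φ := by
    apply monotone_of_deriv_nonneg (fun t => (hφ t).differentiableAt)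
    intro t
    rw [(hφ t).deriv]
    have hdt := hd t
    rw [sub_nonneg, div_le_iff₀ (by positivity)]
    show q * Real.exp t * (1 - q) ≤ 1 / 4 * (1 - q + q * Real.exp t) ^ 2
    nlinarith [sq_nonneg (1 - q - q * Real.exp t)]
  have hφ0 : φ 0 = 0 := by simp [hφDef, hdDef]
  have hmono : MonotoneOn h (Set.Ici (0 : ℝ)) := by
    apply monotoneOn_of_deriv_nonneg (convex_Ici 0)
        (fun t _ => (hh t).differentiableAt.continuousAt.continuousWithinAt)
        (fun t _ => (hh t).differentiableAt.differentiableWithinAt)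
    intro t ht
    rw [(hh t).deriv, ← hφ0]
    exact hφmono (le_of_lt (by simpa using ht))
  have hanti : AntitoneOn h (Set.Iic (0 : ℝ)) := by
    apply antitoneOn_of_deriv_nonpos (convex_Iic 0)
        (fun t _ => (hh t).differentiableAt.continuousAt.continuousWithinAt)
        (fun t _ => (hh t).differentiableAt.differentiableWithinAt)
    intro t ht
    rw [(hh t).deriv, ← hφ0]
    exact hφmono (le_of_lt (by simpa using ht))
  have hh0 : h 0 = 0 := by simp [hhDef, hdDef]
  have hht : 0 ≤ h t := by
    rcases le_total 0 t with ht | ht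
    · rw [← hh0]; exact hmono Set.self_mem_Ici ht ht
    · rw [← hh0]; exact hanti ht Set.self_mem_Iic ht
  have : Real.log (d t) ≤ q * t + t ^ 2 / 8 := by
    have := hht
    simp only [hhDef] at this
    linarith
  exact (Real.log_le_iff_le_exp (hd t)).1 this

/-- weight of a single slot outcome -/
noncomputable def wgt (N : ℕ) (μ : ℝ) : Fin N × Bool → ℝ :=
  fun u => (1 / N) * (if u.2 then μ else 1 - μ)

def Sv {N k : ℕ} (n : Fin N) (v : Fin k → Fin N × Bool) : ℕ :=
  (Finset.univ.filter fun i => (v i).1 = n).card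

def numv {N k : ℕ} (n : Fin N) (v : Fin k → Fin N × Bool) : ℕ :=
  (Finset.univ.filter fun i => (v i).1 = n ∧ (v i).2 = true).card

lemma wgt_nonneg {N : ℕ} {μ : ℝ} (h0 : 0 ≤ μ) (h1 : μ ≤ 1) (u : Fin N × Bool) :
    0 ≤ wgt N μ u := by
  unfold wgt
  have h2 : (0:ℝ) ≤ 1 / (N:ℝ) := by positivity
  split_ifs
  · exact mul_nonneg h2 h0
  · exact mul_nonneg h2 (by linarith)

lemma sum_fin_ite {N : ℕ} (n : Fin N) (A B : ℝ) :
    ∑ c : Fin N, (if c = n then A else B) = A + ((N : ℝ) - 1) * B := by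
  have h1 : ∀ c : Fin N, (if c = n then A else B) = B + (if c = n then A - B else 0) := by
    intro c; split_ifs <;> ring
  rw [Finset.sum_congr rfl fun c _ => h1 c, Finset.sum_add_distrib,
    Finset.sum_ite_eq' Finset.univ n fun _ => A - B]
  have hN : 1 ≤ N := n.pos
  simp [Finset.card_univ]
  ring

lemma Sv_cast {N k : ℕ} (n : Fin N) (v : Fin k → Fin N × Bool) :
    (Sv n v : ℝ) = ∑ i, (if (v i).1 = n then (1:ℝ) else 0) := by
  rw [Sv, Finset.card_filter]
  push_cast
  rfl

lemma numv_cast {N k : ℕ} (n : Fin N) (v : Fin k → Fin N × Bool) :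
    (numv n v : ℝ) = ∑ i, (if (v i).1 = n ∧ (v i).2 = true then (1:ℝ) else 0) := by
  rw [numv, Finset.card_filter]
  push_cast
  rfl

lemma sum_filter_le {ι : Type*} [Fintype ι] (p : ι → Prop) [DecidablePred p] (W G : ι → ℝ)
    (hG : ∀ v, 0 ≤ G v) (h : ∀ v, p v → W v ≤ G v) :
    ∑ v ∈ Finset.univ.filter p, W v ≤ ∑ v, G v := by
  calc ∑ v ∈ Finset.univ.filter p, W v ≤ ∑ v ∈ Finset.univ.filter p, G v :=
        Finset.sum_le_sum fun v hv => h v (Finset.mem_filter.1 hv).2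
    _ ≤ ∑ v, G v :=
        Finset.sum_le_sum_of_subset_of_nonneg (Finset.filter_subset _ _)
          fun v _ _ => hG v

end Aux

lemma slot_a {N : ℕ} (n : Fin N) (μ s : ℝ) :
    ∑ u : Fin N × Bool, wgt N μ u * Real.exp (s * (if u.1 = n then (1:ℝ) else 0)) =
      1 - 1 / N + (1 / N) * Real.exp s := by
  rw [Fintype.sum_prod_type]
  have h : ∀ c : Fin N,
      ∑ b : Bool, wgt N μ (c, b) * Real.exp (s * (if (c, b).1 = n then (1:ℝ) else 0)) =
        if c = n then (1 / N) * Real.exp s else 1 / N := by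
    intro c; by_cases hc : c = n <;> simp [wgt, hc] <;> ring
  rw [Finset.sum_congr rfl fun c _ => h c, sum_fin_ite]
  have hN0 : (N : ℝ) ≠ 0 := Nat.cast_ne_zero.2 n.pos.ne'
  field_simp
  ring

lemma boundA {N k : ℕ} (n : Fin N) {μ : ℝ} (hμ0 : 0 ≤ μ) (hμ1 : μ ≤ 1) :
    ∑ v ∈ Finset.univ.filter (fun v : Fin k → Fin N × Bool => ¬ ((k:ℝ) ≤ 2 * N * Sv n v)),
      ∏ i, wgt N μ (v i)
    ≤ Real.exp (-(k : ℝ) / (2 * (N:ℝ) ^ 2)) := by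
  classical
  have hN0 : (0:ℝ) < N := by exact_mod_cast n.pos
  have hq1 : (1:ℝ) / N ≤ 1 := by
    rw [div_le_one hN0]; exact_mod_cast n.pos
  set t : ℝ := 2 / N with ht
  have ht0 : 0 < t := by positivity
  set W := fun v : Fin k → Fin N × Bool => ∏ i, wgt N μ (v i) with hWdef
  have hW : ∀ v, 0 ≤ W v := fun v => Finset.prod_nonneg fun i _ => wgt_nonneg hμ0 hμ1 _
  have step1 : ∑ v ∈ Finset.univ.filter
        (fun v : Fin k → Fin N × Bool => ¬ ((k:ℝ) ≤ 2 * N * Sv n v)), W v ≤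
      ∑ v, Real.exp (t * k / (2 * N)) * (W v * Real.exp (-t * (Sv n v : ℝ))) := by
    refine sum_filter_le _ W _
      (fun v => mul_nonneg (Real.exp_pos _).le (mul_nonneg (hW v) (Real.exp_pos _).le)) ?_
    intro v hv
    push_neg at hv
    have h1 : 0 ≤ t * k / (2 * N) + (-t * (Sv n v : ℝ)) := by
      have key : t * k / (2 * N) + (-t * (Sv n v : ℝ)) =
          t / (2 * N) * ((k:ℝ) - 2 * N * Sv n v) := by field_simp; ring
      rw [key]
      exact mul_nonneg (by positivity) (by linarith)
    calc W v = W v * 1 := (mul_one _).symm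
      _ ≤ W v * Real.exp (t * k / (2 * N) + (-t * (Sv n v : ℝ))) :=
          mul_le_mul_of_nonneg_left (Real.one_le_exp h1) (hW v)
      _ = Real.exp (t * k / (2 * N)) * (W v * Real.exp (-t * (Sv n v : ℝ))) := by
          rw [Real.exp_add]; ring
  have hfac : ∀ v : Fin k → Fin N × Bool, W v * Real.exp (-t * (Sv n v : ℝ)) =
      ∏ i, (wgt N μ (v i) * Real.exp (-t * (if (v i).1 = n then (1:ℝ) else 0))) := by
    intro v
    rw [Finset.prod_mul_distrib, ← Real.exp_sum, Sv_cast, Finset.mul_sum]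
  have step2 : ∑ v : Fin k → Fin N × Bool, W v * Real.exp (-t * (Sv n v : ℝ)) =
      (1 - 1 / N + (1 / N) * Real.exp (-t)) ^ k := by
    have hps := Fintype.prod_sum
      (fun (_ : Fin k) (u : Fin N × Bool) =>
        wgt N μ u * Real.exp (-t * (if u.1 = n then (1:ℝ) else 0)))
    calc ∑ v : Fin k → Fin N × Bool, W v * Real.exp (-t * (Sv n v : ℝ))
        = ∑ v : Fin k → Fin N × Bool,
            ∏ i, (wgt N μ (v i) * Real.exp (-t * (if (v i).1 = n then (1:ℝ) else 0))) :=
          Finset.sum_congr rfl fun v _ => hfac v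
      _ = ∏ i : Fin k, ∑ u : Fin N × Bool,
            (wgt N μ u * Real.exp (-t * (if u.1 = n then (1:ℝ) else 0))) := hps.symm
      _ = (1 - 1 / N + (1 / N) * Real.exp (-t)) ^ k := by
          rw [Finset.prod_congr rfl fun i _ => slot_a n μ (-t)]
          simp [Finset.card_univ]
  have hber := bernoulli_mgf_le (by positivity : (0:ℝ) ≤ 1 / N) hq1 (-t)
  have hpos := bernoulli_d_pos (by positivity : (0:ℝ) ≤ 1 / N) hq1 (-t)
  calc ∑ v ∈ Finset.univ.filter
        (fun v : Fin k → Fin N × Bool => ¬ ((k:ℝ) ≤ 2 * N * Sv n v)), W v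
      ≤ ∑ v, Real.exp (t * k / (2 * N)) * (W v * Real.exp (-t * (Sv n v : ℝ))) := step1
    _ = Real.exp (t * k / (2 * N)) * (1 - 1 / N + (1 / N) * Real.exp (-t)) ^ k := by
        rw [← Finset.mul_sum, step2]
    _ ≤ Real.exp (t * k / (2 * N)) * (Real.exp (1 / N * (-t) + (-t) ^ 2 / 8)) ^ k := by
        refine mul_le_mul_of_nonneg_left (pow_le_pow_left₀ hpos.le hber k) (Real.exp_pos _).le
    _ = Real.exp (t * k / (2 * N) + k * (1 / N * (-t) + (-t) ^ 2 / 8)) := by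
        rw [← Real.exp_nat_mul, ← Real.exp_add]
    _ ≤ Real.exp (-(k : ℝ) / (2 * (N:ℝ) ^ 2)) := by
        apply le_of_eq
        congr 1
        rw [ht]
        field_simp
        ring

lemma slot_b {N : ℕ} (n : Fin N) (μ s : ℝ) :
    ∑ u : Fin N × Bool,
      wgt N μ u * (if u.1 = n then Real.exp (s * (if u.2 = true then (1:ℝ) else 0)) else 0) =
      (1 / N) * (1 - μ + μ * Real.exp s) := by
  rw [Fintype.sum_prod_type]
  have h : ∀ c : Fin N,
      ∑ b : Bool, wgt N μ (c, b) *
        (if (c, b).1 = n then Real.exp (s * (if (c, b).2 = true then (1:ℝ) else 0)) else 0) =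
        if c = n then (1 / N) * (1 - μ + μ * Real.exp s) else 0 := by
    intro c; by_cases hc : c = n <;> simp [wgt, hc] <;> ring
  rw [Finset.sum_congr rfl fun c _ => h c, sum_fin_ite]
  ring

lemma slot_c {N : ℕ} (n : Fin N) (μ : ℝ) :
    ∑ u : Fin N × Bool, wgt N μ u * (if u.1 = n then 0 else 1) = 1 - 1 / N := by
  rw [Fintype.sum_prod_type]
  have h : ∀ c : Fin N,
      ∑ b : Bool, wgt N μ (c, b) * (if (c, b).1 = n then (0:ℝ) else 1) =
        if c = n then (0:ℝ) else 1 / N := by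
    intro c; by_cases hc : c = n <;> simp [wgt, hc] <;> ring
  rw [Finset.sum_congr rfl fun c _ => h c, sum_fin_ite]
  have hN0 : (N : ℝ) ≠ 0 := Nat.cast_ne_zero.2 n.pos.ne'
  field_simp
  ring

lemma boundB_fiber {N k : ℕ} (n : Fin N) {μ Δ : ℝ} (hμ0 : 0 < μ) (hμ1 : μ ≤ 1)
    (hΔ : 0 < Δ) (T : Finset (Fin k)) :
    ∑ v ∈ Finset.univ.filter (fun v : Fin k → Fin N × Bool =>
        (((k:ℝ) ≤ 2 * N * Sv n v) ∧ ((Sv n v : ℝ) * (μ + Δ / 2) ≤ numv n v)) ∧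
        Finset.univ.filter (fun i => (v i).1 = n) = T),
      ∏ i, wgt N μ (v i)
    ≤ Real.exp (-(Δ ^ 2 * k) / (4 * N)) *
        ((1 / N : ℝ) ^ T.card * (1 - 1 / N) ^ (k - T.card)) := by
  classical
  have hN0 : (0:ℝ) < N := by exact_mod_cast n.pos
  have hq0 : (0:ℝ) ≤ 1 - 1 / N := by
    rw [sub_nonneg, div_le_one hN0]; exact_mod_cast n.pos
  set s : ℝ := 2 * Δ with hs
  set W := fun v : Fin k → Fin N × Bool => ∏ i, wgt N μ (v i) with hWdef
  have hW : ∀ v, 0 ≤ W v := fun v => Finset.prod_nonneg fun i _ => wgt_nonneg hμ0.le hμ1 _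
  by_cases hT : (k:ℝ) ≤ 2 * N * T.card
  · -- main case
    set m := T.card with hm
    set a : ℝ := (m : ℝ) * (μ + Δ / 2) with ha
    set G : Fin k → Fin N × Bool → ℝ := fun i u =>
      wgt N μ u * (if i ∈ T then
        (if u.1 = n then Real.exp (s * (if u.2 = true then (1:ℝ) else 0)) else 0)
        else (if u.1 = n then 0 else 1)) with hGdef
    have hGnn : ∀ i u, 0 ≤ G i u := by
      intro i u
      refine mul_nonneg (wgt_nonneg hμ0.le hμ1 _) ?_
      split_ifs <;> positivity
    have step1 : ∑ v ∈ Finset.univ.filter (fun v : Fin k → Fin N × Bool =>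
          (((k:ℝ) ≤ 2 * N * Sv n v) ∧ ((Sv n v : ℝ) * (μ + Δ / 2) ≤ numv n v)) ∧
          Finset.univ.filter (fun i => (v i).1 = n) = T), W v ≤
        ∑ v : Fin k → Fin N × Bool, Real.exp (-s * a) * ∏ i, G i (v i) := by
      refine sum_filter_le _ W _
        (fun v => mul_nonneg (Real.exp_pos _).le
          (Finset.prod_nonneg fun i _ => hGnn i (v i))) ?_
      rintro v ⟨⟨-, hnum⟩, hTv⟩
      have hSvT : Sv n v = m := by rw [Sv, hTv]
      have hmem : ∀ i, i ∈ T ↔ (v i).1 = n := by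
        intro i
        rw [← hTv, Finset.mem_filter]
        simp
      have hGv : ∀ i, G i (v i) =
          wgt N μ (v i) *
            Real.exp (s * (if (v i).1 = n ∧ (v i).2 = true then (1:ℝ) else 0)) := by
        intro i
        by_cases hi : i ∈ T
        · have h1 : (v i).1 = n := (hmem i).1 hi
          simp only [hGdef, hi, if_true, h1]
          by_cases h2 : (v i).2 = true <;> simp [h2]
        · have h1 : ¬ (v i).1 = n := fun h => hi ((hmem i).2 h)
          simp [hGdef, hi, h1]
      have hprod : ∏ i, G i (v i) = W v * Real.exp (s * (numv n v : ℝ)) := by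
        rw [Finset.prod_congr rfl fun i _ => hGv i, Finset.prod_mul_distrib,
          ← Real.exp_sum, numv_cast, Finset.mul_sum]
      rw [hprod]
      have hexp : 0 ≤ -s * a + s * (numv n v : ℝ) := by
        have h2 : a ≤ (numv n v : ℝ) := by rw [ha, ← hSvT]; push_cast; exact hnum
        have h3 : 0 < s := by rw [hs]; linarith
        nlinarith
      calc W v = W v * 1 := (mul_one _).symm
        _ ≤ W v * Real.exp (-s * a + s * (numv n v : ℝ)) :=
            mul_le_mul_of_nonneg_left (Real.one_le_exp hexp) (hW v)
        _ = Real.exp (-s * a) * (W v * Real.exp (s * (numv n v : ℝ))) := by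
            rw [Real.exp_add]; ring
    have step2 : ∑ v : Fin k → Fin N × Bool, ∏ i, G i (v i) =
        ((1 / N : ℝ) * (1 - μ + μ * Real.exp s)) ^ m * (1 - 1 / N) ^ (k - m) := by
      have hps := Fintype.prod_sum G
      refine hps.symm.trans ?_
      have hslot : ∀ i : Fin k, ∑ u : Fin N × Bool, G i u =
          if i ∈ T then (1 / N : ℝ) * (1 - μ + μ * Real.exp s) else 1 - 1 / N := by
        intro i
        by_cases hi : i ∈ T
        · simp only [hGdef, hi, if_true]
          exact slot_b n μ s
        · simp only [hGdef, hi, if_false]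
          exact slot_c n μ
      rw [Finset.prod_congr rfl fun i _ => hslot i, Finset.prod_ite]
      have h1 : Finset.univ.filter (fun i : Fin k => i ∈ T) = T := by ext i; simp
      have h2 : Finset.univ.filter (fun i : Fin k => ¬ i ∈ T) = Tᶜ := by ext i; simp
      rw [h1, h2, Finset.prod_const, Finset.prod_const, Finset.card_compl,
        Fintype.card_fin]
    calc ∑ v ∈ Finset.univ.filter (fun v : Fin k → Fin N × Bool =>
          (((k:ℝ) ≤ 2 * N * Sv n v) ∧ ((Sv n v : ℝ) * (μ + Δ / 2) ≤ numv n v)) ∧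
          Finset.univ.filter (fun i => (v i).1 = n) = T), W v
        ≤ ∑ v : Fin k → Fin N × Bool, Real.exp (-s * a) * ∏ i, G i (v i) := step1
      _ = Real.exp (-s * a) *
            (((1 / N : ℝ) * (1 - μ + μ * Real.exp s)) ^ m * (1 - 1 / N) ^ (k - m)) := by
          rw [← Finset.mul_sum, step2]
      _ = (Real.exp (-s * (μ + Δ / 2)) * (1 - μ + μ * Real.exp s)) ^ m *
            ((1 / N : ℝ) ^ m * (1 - 1 / N) ^ (k - m)) := by
          rw [mul_pow, mul_pow, ha, show -s * ((m:ℝ) * (μ + Δ / 2)) =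
            (m : ℝ) * (-s * (μ + Δ / 2)) by ring, Real.exp_nat_mul]
          ring
      _ ≤ (Real.exp (-(Δ ^ 2) / 2)) ^ m * ((1 / N : ℝ) ^ m * (1 - 1 / N) ^ (k - m)) := by
          refine mul_le_mul_of_nonneg_right (pow_le_pow_left₀ ?_ ?_ m) ?_
          · exact mul_nonneg (Real.exp_pos _).le (bernoulli_d_pos hμ0.le hμ1 s).le
          · have hber := bernoulli_mgf_le hμ0.le hμ1 s
            calc Real.exp (-s * (μ + Δ / 2)) * (1 - μ + μ * Real.exp s)
                ≤ Real.exp (-s * (μ + Δ / 2)) * Real.exp (μ * s + s ^ 2 / 8) :=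
                  mul_le_mul_of_nonneg_left hber (Real.exp_pos _).le
              _ = Real.exp (-s * (μ + Δ / 2) + (μ * s + s ^ 2 / 8)) := (Real.exp_add _ _).symm
              _ = Real.exp (-(Δ ^ 2) / 2) := by rw [hs]; congr 1; ring
          · positivity
      _ ≤ Real.exp (-(Δ ^ 2 * k) / (4 * N)) *
            ((1 / N : ℝ) ^ T.card * (1 - 1 / N) ^ (k - T.card)) := by
          refine mul_le_mul_of_nonneg_right ?_ (by positivity)
          rw [← Real.exp_nat_mul]
          apply Real.exp_le_exp.2
          have h5 : -(Δ ^ 2 * (k:ℝ)) / (4 * N) = -(Δ ^ 2 * k / (4 * N)) := by ring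
          have h6 : (m:ℝ) * (-(Δ ^ 2) / 2) = -((m:ℝ) * Δ ^ 2 / 2) := by ring
          rw [h5, h6, neg_le_neg_iff, div_le_div_iff₀ (by positivity) (by positivity)]
          nlinarith [mul_le_mul_of_nonneg_left hT (sq_nonneg Δ)]
  · -- fiber is empty
    have hempty : Finset.univ.filter (fun v : Fin k → Fin N × Bool =>
        (((k:ℝ) ≤ 2 * N * Sv n v) ∧ ((Sv n v : ℝ) * (μ + Δ / 2) ≤ numv n v)) ∧
        Finset.univ.filter (fun i => (v i).1 = n) = T) = ∅ := by
      refine Finset.filter_eq_empty_iff.2 ?_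
      rintro v - ⟨⟨hk, -⟩, hTv⟩
      have hSvT : Sv n v = T.card := by rw [Sv, hTv]
      rw [hSvT] at hk
      exact hT hk
    rw [hempty]
    simp only [Finset.sum_empty]
    positivity

lemma boundB_total {N k : ℕ} (n : Fin N) {μ Δ : ℝ} (hμ0 : 0 < μ) (hμ1 : μ ≤ 1)
    (hΔ : 0 < Δ) :
    ∑ v ∈ Finset.univ.filter (fun v : Fin k → Fin N × Bool =>
        ((k:ℝ) ≤ 2 * N * Sv n v) ∧ ((Sv n v : ℝ) * (μ + Δ / 2) ≤ numv n v)),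
      ∏ i, wgt N μ (v i)
    ≤ Real.exp (-(Δ ^ 2 * k) / (4 * N)) := by
  classical
  have hN0 : (0:ℝ) < N := by exact_mod_cast n.pos
  have hq0 : (0:ℝ) ≤ 1 - 1 / N := by
    rw [sub_nonneg, div_le_one hN0]; exact_mod_cast n.pos
  set W := fun v : Fin k → Fin N × Bool => ∏ i, wgt N μ (v i) with hWdef
  set B := fun v : Fin k → Fin N × Bool =>
    ((k:ℝ) ≤ 2 * N * Sv n v) ∧ ((Sv n v : ℝ) * (μ + Δ / 2) ≤ numv n v) with hBdef
  rw [← Finset.sum_fiberwise (Finset.univ.filter B)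
    (fun v => Finset.univ.filter fun i => (v i).1 = n) W]
  have hsum1 : ∑ T : Finset (Fin k), (1 / N : ℝ) ^ T.card * (1 - 1 / N) ^ (k - T.card)
      = 1 := by
    have h := Fintype.prod_add (fun _ : Fin k => (1 / N : ℝ)) (fun _ : Fin k => 1 - 1 / N)
    have hL : ∏ _a : Fin k, ((1 / N : ℝ) + (1 - 1 / N)) = 1 := by
      rw [Finset.prod_congr rfl fun a _ => (by ring : (1 / N : ℝ) + (1 - 1 / N) = 1)]
      simp
    rw [hL] at h
    calc ∑ T : Finset (Fin k), (1 / N : ℝ) ^ T.card * (1 - 1 / N) ^ (k - T.card)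
        = ∑ t : Finset (Fin k), (∏ _a ∈ t, (1 / N : ℝ)) * ∏ _a ∈ tᶜ, (1 - 1 / N : ℝ) := by
          refine Finset.sum_congr rfl fun T _ => ?_
          rw [Finset.prod_const, Finset.prod_const, Finset.card_compl, Fintype.card_fin]
      _ = 1 := h.symm
  calc ∑ T : Finset (Fin k),
        ∑ v ∈ (Finset.univ.filter B).filter
          (fun v => Finset.univ.filter (fun i => (v i).1 = n) = T), W v
      ≤ ∑ T : Finset (Fin k), Real.exp (-(Δ ^ 2 * k) / (4 * N)) *
          ((1 / N : ℝ) ^ T.card * (1 - 1 / N) ^ (k - T.card)) := by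
        refine Finset.sum_le_sum fun T _ => ?_
        rw [Finset.filter_filter]
        exact boundB_fiber n hμ0 hμ1 hΔ T
    _ = Real.exp (-(Δ ^ 2 * k) / (4 * N)) := by
        rw [← Finset.mul_sum, hsum1, mul_one]

lemma main_real {N k : ℕ} (n : Fin N) {μ Δ : ℝ} (hμ0 : 0 < μ) (hμ1 : μ ≤ 1) (hΔ : 0 < Δ) :
    ∑ v ∈ Finset.univ.filter (fun v : Fin k → Fin N × Bool =>
        (if Sv n v = 0 then (0:ℝ) else (numv n v : ℝ) / (Sv n v)) - μ ≥ Δ / 2),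
      ∏ i, wgt N μ (v i)
    ≤ Real.exp (-(k : ℝ) / (2 * (N:ℝ) ^ 2)) + Real.exp (-(Δ ^ 2 * k) / (4 * N)) := by
  classical
  set W := fun v : Fin k → Fin N × Bool => ∏ i, wgt N μ (v i) with hWdef
  have hW : ∀ v, 0 ≤ W v := fun v => Finset.prod_nonneg fun i _ => wgt_nonneg hμ0.le hμ1 _
  set A := fun v : Fin k → Fin N × Bool => ¬ ((k:ℝ) ≤ 2 * N * Sv n v) with hAdef
  set B := fun v : Fin k → Fin N × Bool =>
    ((k:ℝ) ≤ 2 * N * Sv n v) ∧ ((Sv n v : ℝ) * (μ + Δ / 2) ≤ numv n v) with hBdef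
  have hsub : Finset.univ.filter (fun v : Fin k → Fin N × Bool =>
      (if Sv n v = 0 then (0:ℝ) else (numv n v : ℝ) / (Sv n v)) - μ ≥ Δ / 2) ⊆
      Finset.univ.filter A ∪ Finset.univ.filter B := by
    intro v hv
    rw [Finset.mem_filter] at hv
    obtain ⟨-, hv⟩ := hv
    rw [Finset.mem_union, Finset.mem_filter, Finset.mem_filter]
    by_cases hA : (k:ℝ) ≤ 2 * N * Sv n v
    · right
      refine ⟨Finset.mem_univ _, hA, ?_⟩
      by_cases hSv : Sv n v = 0
      · rw [hSv] at hv; simp at hv; linarith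
      · rw [if_neg hSv] at hv
        have hSpos : (0:ℝ) < (Sv n v : ℝ) := by
          exact_mod_cast Nat.pos_of_ne_zero hSv
        rw [ge_iff_le, le_sub_iff_add_le, le_div_iff₀ hSpos] at hv
        nlinarith [hv]
    · left; exact ⟨Finset.mem_univ _, hA⟩
  have hsplit : ∑ v ∈ (Finset.univ.filter A ∪ Finset.univ.filter B), W v +
      ∑ v ∈ (Finset.univ.filter A ∩ Finset.univ.filter B), W v =
      ∑ v ∈ Finset.univ.filter A, W v + ∑ v ∈ Finset.univ.filter B, W v :=
    Finset.sum_union_inter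
  have hinter : 0 ≤ ∑ v ∈ (Finset.univ.filter A ∩ Finset.univ.filter B), W v :=
    Finset.sum_nonneg fun v _ => hW v
  calc ∑ v ∈ Finset.univ.filter (fun v : Fin k → Fin N × Bool =>
        (if Sv n v = 0 then (0:ℝ) else (numv n v : ℝ) / (Sv n v)) - μ ≥ Δ / 2), W v
      ≤ ∑ v ∈ (Finset.univ.filter A ∪ Finset.univ.filter B), W v :=
        Finset.sum_le_sum_of_subset_of_nonneg hsub fun v _ _ => hW v
    _ ≤ ∑ v ∈ Finset.univ.filter A, W v + ∑ v ∈ Finset.univ.filter B, W v := by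
        linarith
    _ ≤ Real.exp (-(k : ℝ) / (2 * (N:ℝ) ^ 2)) + Real.exp (-(Δ ^ 2 * k) / (4 * N)) :=
        add_le_add (boundA n hμ0.le hμ1) (boundB_total n hμ0 hμ1 hΔ)

open MeasureTheory ProbabilityTheory

/-- **Upper tail of the empirical reliability estimate after `k` exploration slots.**
In each of `k` exploration slots a channel is chosen uniformly at random
(`X i` i.i.d. uniform on `{1,…,N}`), and independently the state of channel `n`
in each slot is Bernoulli(`μn`) (`Y i`).  Let `S` be the number of slots in which
channel `n` was selected and let `μ̂n` be the empirical mean of the observed states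
of channel `n` over those slots (`0` if `S = 0`).  Then for any `Δ > 0`,
`P(μ̂n − μn ≥ Δ/2) ≤ exp(−k/(2N²)) + exp(−Δ²k/(4N))`. -/
theorem empirical_estimate_upper_tail
    {Ω : Type*} [MeasurableSpace Ω] (P : Measure Ω) [IsProbabilityMeasure P]
    (N : ℕ) (hN : 1 ≤ N) (k : ℕ) (n : Fin N)
    (μn : ℝ) (hμn : μn ∈ Set.Ioc (0 : ℝ) 1) (Δ : ℝ) (hΔ : 0 < Δ)
    (X : Fin k → Ω → Fin N) (Y : Fin k → Ω → Bool)
    (hXmeas : ∀ i, Measurable (X i)) (hYmeas : ∀ i, Measurable (Y i))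
    (hXdist : ∀ i (c : Fin N), P {ω | X i ω = c} = ENNReal.ofReal (1 / N))
    (hYdist : ∀ i, P {ω | Y i ω = true} = ENNReal.ofReal μn)
    (hindep : iIndepFun
      (fun i : Fin k => fun ω => (X i ω, Y i ω)) P)
    (hXY : ∀ i, IndepFun (X i) (Y i) P)
    (S : Ω → ℕ) (hS : ∀ ω, S ω = (Finset.univ.filter fun i => X i ω = n).card)
    (est : Ω → ℝ)
    (hest : ∀ ω, est ω =
      if S ω = 0 then 0
      else ((Finset.univ.filter fun i => X i ω = n ∧ Y i ω = true).card : ℝ) / S ω) :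
    P {ω | est ω - μn ≥ Δ / 2} ≤
      ENNReal.ofReal (Real.exp (-(k : ℝ) / (2 * (N : ℝ) ^ 2))) +
        ENNReal.ofReal (Real.exp (-(Δ ^ 2 * k) / (4 * N))) := by
  classical
  obtain ⟨hμ0, hμ1⟩ := hμn
  -- per-tuple events
  have hset : ∀ v : Fin k → Fin N × Bool,
      {ω | ∀ i, (X i ω, Y i ω) = v i} =
        ⋂ i, (fun ω => (X i ω, Y i ω)) ⁻¹' {v i} := by
    intro v; ext ω; simp
  have hmeasv : ∀ v : Fin k → Fin N × Bool,
      MeasurableSet {ω | ∀ i, (X i ω, Y i ω) = v i} := by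
    intro v
    rw [hset v]
    exact MeasurableSet.iInter fun i =>
      ((hXmeas i).prodMk (hYmeas i)) (measurableSet_singleton _)
  have hsingle : ∀ v : Fin k → Fin N × Bool,
      P {ω | ∀ i, (X i ω, Y i ω) = v i} = ENNReal.ofReal (∏ i, wgt N μn (v i)) := by
    intro v
    rw [hset v, hindep.meas_iInter fun i => ⟨{v i}, measurableSet_singleton _, rfl⟩]
    have h2 : ∀ i, P ((fun ω => (X i ω, Y i ω)) ⁻¹' {v i}) =
        ENNReal.ofReal (wgt N μn (v i)) := by
      intro i
      have h3 : (fun ω => (X i ω, Y i ω)) ⁻¹' {v i} =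
          (X i ⁻¹' {(v i).1}) ∩ (Y i ⁻¹' {(v i).2}) := by
        ext ω; simp [Prod.ext_iff]
      have hX' : P (X i ⁻¹' {(v i).1}) = ENNReal.ofReal (1 / N) := by
        have : X i ⁻¹' {(v i).1} = {ω | X i ω = (v i).1} := by ext ω; simp
        rw [this]; exact hXdist i _
      have hY' : P (Y i ⁻¹' {(v i).2}) =
          ENNReal.ofReal (if (v i).2 then μn else 1 - μn) := by
        cases hb : (v i).2
        · have h4 : Y i ⁻¹' {false} = {ω | Y i ω = true}ᶜ := by
            ext ω; simp
          have hms : MeasurableSet {ω | Y i ω = true} :=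
            hYmeas i (measurableSet_singleton true)
          rw [h4, prob_compl_eq_one_sub hms, hYdist i, if_neg (by simp),
            ENNReal.ofReal_sub _ hμ0.le, ENNReal.ofReal_one]
        · have h4 : Y i ⁻¹' {true} = {ω | Y i ω = true} := by ext ω; simp
          rw [h4, hYdist i, if_pos rfl]
      rw [h3, (hXY i).measure_inter_preimage_eq_mul _ _
        (measurableSet_singleton _) (measurableSet_singleton _), hX', hY',
        ← ENNReal.ofReal_mul (by positivity)]
      rfl
    rw [Finset.prod_congr rfl fun i _ => h2 i,
      ← ENNReal.ofReal_prod_of_nonneg fun i _ => wgt_nonneg hμ0.le hμ1 (v i)]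
  -- rewrite the event as a finite disjoint union over tuples
  set cond : (Fin k → Fin N × Bool) → Prop := fun v =>
    (if Sv n v = 0 then (0:ℝ) else (numv n v : ℝ) / (Sv n v)) - μn ≥ Δ / 2 with hconddef
  have hev : {ω | est ω - μn ≥ Δ / 2} =
      ⋃ v ∈ Finset.univ.filter cond, {ω | ∀ i, (X i ω, Y i ω) = v i} := by
    ext ω
    have hestv : ∀ v : Fin k → Fin N × Bool, (∀ i, (X i ω, Y i ω) = v i) →
        est ω = (if Sv n v = 0 then (0:ℝ) else (numv n v : ℝ) / (Sv n v)) := by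
      intro v hv
      have hXv : ∀ i, X i ω = (v i).1 := fun i => by rw [← hv i]
      have hYv : ∀ i, Y i ω = (v i).2 := fun i => by rw [← hv i]
      have hSv : S ω = Sv n v := by
        rw [hS ω, Sv]
        congr 1
        apply Finset.filter_congr
        intro i _
        simp [hXv i]
      have hnv : (Finset.univ.filter fun i => X i ω = n ∧ Y i ω = true).card = numv n v := by
        rw [numv]
        congr 1
        apply Finset.filter_congr
        intro i _
        simp [hXv i, hYv i]
      rw [hest ω, hSv, hnv]
    simp only [Set.mem_iUnion, Set.mem_setOf_eq, Finset.mem_filter, Finset.mem_univ, true_and]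
    constructor
    · intro h
      refine ⟨fun i => (X i ω, Y i ω), ?_, fun i => rfl⟩
      simp only [hconddef]
      rw [← hestv (fun i => (X i ω, Y i ω)) (fun i => rfl)]
      exact h
    · rintro ⟨v, hc, hvi⟩
      have := hestv v hvi
      simp only [hconddef] at hc
      rw [this]
      exact hc
  have hdisj : Set.PairwiseDisjoint (↑(Finset.univ.filter cond))
      (fun v : Fin k → Fin N × Bool => {ω | ∀ i, (X i ω, Y i ω) = v i}) := by
    intro v _ v' _ hvv'
    refine Set.disjoint_left.2 fun ω h1 h2 => hvv' ?_
    funext i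
    rw [← h1 i, ← h2 i]
  rw [hev, measure_biUnion_finset hdisj fun v _ => hmeasv v]
  rw [Finset.sum_congr rfl fun v _ => hsingle v,
    ← ENNReal.ofReal_sum_of_nonneg fun v _ =>
      Finset.prod_nonneg fun i _ => wgt_nonneg hμ0.le hμ1 (v i)]
  calc ENNReal.ofReal (∑ v ∈ Finset.univ.filter cond, ∏ i, wgt N μn (v i))
      ≤ ENNReal.ofReal (Real.exp (-(k : ℝ) / (2 * (N : ℝ) ^ 2)) +
          Real.exp (-(Δ ^ 2 * k) / (4 * N))) :=
        ENNReal.ofReal_le_ofReal (main_real n hμ0 hμ1 hΔ)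
    _ = ENNReal.ofReal (Real.exp (-(k : ℝ) / (2 * (N : ℝ) ^ 2))) +
          ENNReal.ofReal (Real.exp (-(Δ ^ 2 * k) / (4 * N))) :=
        ENNReal.ofReal_add (Real.exp_pos _).le (Real.exp_pos _).le
end
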